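/- Let q(z) = ∏_{j=1}^n (z - z_j) with |z_j| = 1 for all j, and let z_0 on the unit circle be a point where |q| attains its maximum over the unit circle. Then for every r > 0, the number of indices j with z_j on the arc {z_0·e^{iρ} : ρ ∈ [-r, r]} is at most e·n·r. -/

import Mathlib

open Complex Finset Metric

-- chord length bound: |1 - e^{iρ}| ≤ |ρ|
lemma chord_le (ρ : ℝ) : ‖1 - Complex.exp (ρ * Complex.I)‖ ≤ |ρ| := by
  have h : Complex.exp ((ρ:ℂ) * Complex.I) = (Real.cos ρ : ℂ) + (Real.sin ρ : ℂ) * Complex.I := by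
    rw [Complex.exp_mul_I, Complex.ofReal_cos, Complex.ofReal_sin]
  have hsq : ‖1 - Complex.exp (ρ * Complex.I)‖ ^ 2 ≤ |ρ| ^ 2 := by
    rw [h, Complex.sq_norm, Complex.normSq_apply]
    simp only [Complex.sub_re, Complex.sub_im, Complex.one_re, Complex.one_im,
      Complex.add_re, Complex.add_im, Complex.mul_re, Complex.mul_im,
      Complex.I_re, Complex.I_im, Complex.ofReal_re, Complex.ofReal_im]
    have h1 : 1 - ρ ^ 2 / 2 ≤ Real.cos ρ := Real.one_sub_sq_div_two_le_cos
    have h2 : Real.sin ρ ^ 2 + Real.cos ρ ^ 2 = 1 := Real.sin_sq_add_cos_sq ρ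
    rw [_root_.sq_abs]
    nlinarith
  exact (pow_le_pow_iff_left₀ (norm_nonneg _) (abs_nonneg ρ) two_ne_zero).mp hsq


lemma ext_max (n : ℕ) (z : Fin n → ℂ) (M : ℝ)
    (hM : ∀ w : ℂ, ‖w‖ = 1 → ‖∏ j, (w - z j)‖ ≤ M)
    (c : ℂ) (hc : 1 ≤ ‖c‖) :
    ‖∏ j, (c - z j)‖ ≤ M * ‖c‖ ^ n := by
  set g : ℂ → ℂ := fun w => ∏ j, (1 - w * z j) with hg
  have hd : Differentiable ℂ g := by
    apply Differentiable.fun_finsetProd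
    intro j _
    fun_prop
  have hfr : ∀ w ∈ frontier (Metric.ball (0:ℂ) 1), ‖g w‖ ≤ M := by
    intro w hw
    rw [frontier_ball (0:ℂ) one_ne_zero, mem_sphere_zero_iff_norm] at hw
    have hw1 : ‖w‖ = 1 := hw
    have hwc : w * (starRingEnd ℂ) w = 1 := by
      rw [Complex.mul_conj]
      norm_cast
      rw [← Complex.sq_norm, hw1]; norm_num
    have key : g w = w ^ n * ∏ j, ((starRingEnd ℂ) w - z j) := by
      have e1 : ∀ j : Fin n, (1 : ℂ) - w * z j = w * ((starRingEnd ℂ) w - z j) := by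
        intro j
        calc 1 - w * z j = w * (starRingEnd ℂ) w - w * z j := by rw [hwc]
          _ = w * ((starRingEnd ℂ) w - z j) := by ring
      rw [hg]
      simp only
      rw [Finset.prod_congr rfl (fun j _ => e1 j), Finset.prod_mul_distrib,
        Finset.prod_const, Finset.card_univ, Fintype.card_fin]
    rw [key, norm_mul, norm_pow, hw1, one_pow, one_mul]
    exact hM _ (by rw [Complex.norm_conj, hw1])
  have hc0 : c ≠ 0 := by
    intro h; rw [h] at hc; simp at hc; linarith
  have hmem : c⁻¹ ∈ closure (Metric.ball (0:ℂ) 1) := by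
    rw [closure_ball (0:ℂ) one_ne_zero, mem_closedBall_zero_iff]
    rw [norm_inv]
    exact inv_le_one_of_one_le₀ hc
  have hb := Complex.norm_le_of_forall_mem_frontier_norm_le isBounded_ball
    hd.diffContOnCl hfr hmem
  have key2 : (∏ j, (c - z j)) = c ^ n * g c⁻¹ := by
    have e1 : ∀ j : Fin n, c - z j = c * (1 - c⁻¹ * z j) := by
      intro j
      field_simp
    rw [hg]
    simp only
    rw [Finset.prod_congr rfl (fun j _ => e1 j), Finset.prod_mul_distrib,
      Finset.prod_const, Finset.card_univ, Fintype.card_fin]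
  rw [key2, norm_mul, norm_pow]
  calc ‖c‖ ^ n * ‖g c⁻¹‖ ≤ ‖c‖ ^ n * M := by
        apply mul_le_mul_of_nonneg_left hb (by positivity)
    _ = M * ‖c‖ ^ n := by ring


-- existence of a point on the circle avoiding finitely many values
lemma exists_unit_ne (n : ℕ) (z : Fin n → ℂ) :
    ∃ w : ℂ, ‖w‖ = 1 ∧ ∀ j, w ≠ z j := by
  have hinj : Set.InjOn (fun t : ℝ => Complex.exp (t * Complex.I)) (Set.Ioo 0 1) := by
    intro a ha b hb hab
    simp only at hab
    rw [Complex.exp_eq_exp_iff_exists_int] at hab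
    obtain ⟨m, hm⟩ := hab
    have him := congrArg Complex.im hm
    simp [Complex.add_im, Complex.mul_im, Complex.mul_re] at him
    -- him : a = b + m * (2 * π)
    have hπ := Real.pi_gt_three
    have hm0 : m = 0 := by
      obtain ⟨ha1, ha2⟩ := ha
      obtain ⟨hb1, hb2⟩ := hb
      have h1 : |(m : ℝ)| < 1 := by
        rw [abs_lt]
        constructor <;> nlinarith
      have h1' : ((|m| : ℤ) : ℝ) < 1 := by rwa [Int.cast_abs]
      have h2 : |m| < 1 := by exact_mod_cast h1'
      rw [abs_lt] at h2; omega
    rw [hm0] at him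
    simpa using him
  have himg := (Set.Ioo_infinite (by norm_num : (0:ℝ) < 1)).image hinj
  have hfin : (Set.range z).Finite := Set.finite_range z
  have : ¬ ((fun t : ℝ => Complex.exp (t * Complex.I)) '' Set.Ioo 0 1 ⊆ Set.range z) :=
    fun h => himg (hfin.subset h)
  rw [Set.not_subset] at this
  obtain ⟨w, hwmem, hwnot⟩ := this
  obtain ⟨t, _, rfl⟩ := hwmem
  refine ⟨_, by simp [Complex.norm_exp], fun j h => hwnot ⟨j, h.symm⟩⟩


/-- If z₀ maximizes |∏ⱼ (z - zⱼ)| on the unit circle (all |zⱼ| = 1), then for every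
r > 0 the number of zⱼ on the arc {z₀·e^{iρ} : ρ ∈ [-r, r]} is at most e·n·r. -/
theorem zeros_near_max_point (n : ℕ) (z : Fin n → ℂ) (hz : ∀ j, ‖z j‖ = 1)
    (z₀ : ℂ) (hz₀ : ‖z₀‖ = 1)
    (hmax : ∀ w : ℂ, ‖w‖ = 1 →
      ‖∏ j, (w - z j)‖ ≤ ‖∏ j, (z₀ - z j)‖)
    (r : ℝ) (hr : 0 < r) :
    (({j : Fin n | ∃ ρ : ℝ, |ρ| ≤ r ∧ z j = z₀ * Complex.exp (ρ * Complex.I)}).ncard : ℝ)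
      ≤ Real.exp 1 * n * r := by
  classical
  set S : Set (Fin n) :=
    {j : Fin n | ∃ ρ : ℝ, |ρ| ≤ r ∧ z j = z₀ * Complex.exp (ρ * Complex.I)} with hS
  set M : ℝ := ‖∏ j, (z₀ - z j)‖ with hMdef
  -- M > 0
  obtain ⟨w, hw1, hwne⟩ := exists_unit_ne n z
  have hM0 : 0 < M := by
    refine lt_of_lt_of_le ?_ (hmax w hw1)
    rw [norm_prod]
    exact Finset.prod_pos fun j _ => norm_pos_iff.mpr (sub_ne_zero.mpr (hwne j))
  have hne : ∀ j, z₀ - z j ≠ 0 := by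
    intro j h
    apply hM0.ne'
    rw [hMdef, Finset.prod_eq_zero (Finset.mem_univ j) h, norm_zero]
  -- the finset of near zeros
  have hfinS : S.Finite := Set.toFinite S
  set T : Finset (Fin n) := hfinS.toFinset with hT
  set k : ℕ := T.card with hk
  have hncard : S.ncard = k := Set.ncard_eq_toFinset_card S hfinS
  -- chord bound
  have hchord : ∀ j ∈ T, ‖z₀ - z j‖ ≤ r := by
    intro j hj
    rw [hT, Set.Finite.mem_toFinset] at hj
    obtain ⟨ρ, hρ, hzj⟩ := hj
    have e1 : z₀ - z j = z₀ * (1 - Complex.exp (ρ * Complex.I)) := by rw [hzj]; ring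
    rw [e1, norm_mul, hz₀, one_mul]
    exact le_trans (chord_le ρ) hρ
  -- the exterior point
  set δ : ℝ := Real.exp 1 * r with hδ
  have hδ0 : 0 < δ := mul_pos (Real.exp_pos 1) hr
  set p : ℂ := ((1 + δ : ℝ) : ℂ) * z₀ with hp
  have hpabs : ‖p‖ = 1 + δ := by
    rw [hp, norm_mul, Complex.norm_real, hz₀, mul_one, Real.norm_eq_abs, abs_of_pos (by linarith)]
  have h1 : ‖∏ j, (p - z j)‖ ≤ M * (1 + δ) ^ n := by
    have := ext_max n z M hmax p (by rw [hpabs]; linarith)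
    rwa [hpabs] at this
  -- lower bounds for the factors at p
  have hlow1 : ∀ j, δ ≤ ‖p - z j‖ := by
    intro j
    have h := norm_sub_norm_le p (z j)
    rw [hpabs, hz j] at h
    linarith
  have hlow2 : ∀ j, ‖z₀ - z j‖ ≤ ‖p - z j‖ := by
    intro j
    have e0 : Complex.normSq z₀ = 1 := by rw [Complex.normSq_eq_norm_sq, hz₀]; norm_num
    have ej : Complex.normSq (z j) = 1 := by rw [Complex.normSq_eq_norm_sq, hz j]; norm_num
    rw [Complex.normSq_apply] at e0 ej
    apply (pow_le_pow_iff_left₀ (norm_nonneg _) (norm_nonneg _) two_ne_zero).mp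
    rw [Complex.sq_norm, Complex.sq_norm, Complex.normSq_apply, Complex.normSq_apply]
    have hpre : p.re = (1 + δ) * z₀.re := by
      rw [hp]; simp [Complex.mul_re]
    have hpim : p.im = (1 + δ) * z₀.im := by
      rw [hp]; simp [Complex.mul_im]
    rw [Complex.sub_re, Complex.sub_im, Complex.sub_re, Complex.sub_im, hpre, hpim]
    nlinarith [mul_nonneg hδ0.le (sq_nonneg (z₀.re - (z j).re)),
      mul_nonneg hδ0.le (sq_nonneg (z₀.im - (z j).im)), sq_nonneg δ, hδ0.le]
  -- split products
  set P : ℝ := ∏ j ∈ Tᶜ, ‖z₀ - z j‖ with hPP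
  have hPpos : 0 < P :=
    Finset.prod_pos fun j _ => norm_pos_iff.mpr (hne j)
  have hMle : M ≤ r ^ k * P := by
    have e1 : M = (∏ j ∈ T, ‖z₀ - z j‖) * P := by
      rw [hMdef, norm_prod, hPP, Finset.prod_mul_prod_compl]
    rw [e1]
    refine mul_le_mul_of_nonneg_right ?_ hPpos.le
    calc (∏ j ∈ T, ‖z₀ - z j‖) ≤ ∏ _j ∈ T, r :=
          Finset.prod_le_prod (fun j _ => norm_nonneg _) hchord
      _ = r ^ k := by rw [Finset.prod_const, hk]
  have hql : δ ^ k * P ≤ ‖∏ j, (p - z j)‖ := by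
    rw [norm_prod, ← Finset.prod_mul_prod_compl T (fun j => ‖p - z j‖)]
    refine mul_le_mul ?_ ?_ hPpos.le (Finset.prod_nonneg fun j _ => norm_nonneg _)
    · calc δ ^ k = ∏ _j ∈ T, δ := by rw [Finset.prod_const, hk]
        _ ≤ ∏ j ∈ T, ‖p - z j‖ :=
          Finset.prod_le_prod (fun _ _ => hδ0.le) (fun j _ => hlow1 j)
    · exact Finset.prod_le_prod (fun j _ => norm_nonneg _) (fun j _ => hlow2 j)
  -- combine and cancel
  have hchain : δ ^ k * P ≤ (r ^ k * (1 + δ) ^ n) * P := by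
    calc δ ^ k * P ≤ ‖∏ j, (p - z j)‖ := hql
      _ ≤ M * (1 + δ) ^ n := h1
      _ ≤ (r ^ k * P) * (1 + δ) ^ n :=
        mul_le_mul_of_nonneg_right hMle (by positivity)
      _ = (r ^ k * (1 + δ) ^ n) * P := by ring
  have h5 : δ ^ k ≤ r ^ k * (1 + δ) ^ n := le_of_mul_le_mul_right hchain hPpos
  have h6 : Real.exp 1 ^ k * r ^ k ≤ (1 + δ) ^ n * r ^ k := by
    calc Real.exp 1 ^ k * r ^ k = δ ^ k := by rw [hδ, mul_pow]
      _ ≤ r ^ k * (1 + δ) ^ n := h5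
      _ = (1 + δ) ^ n * r ^ k := by ring
  have h7 : Real.exp 1 ^ k ≤ (1 + δ) ^ n :=
    le_of_mul_le_mul_right h6 (by positivity)
  have h8 : Real.exp (k : ℝ) ≤ Real.exp ((n : ℝ) * δ) := by
    calc Real.exp (k : ℝ) = Real.exp 1 ^ k := by
          rw [← Real.exp_nat_mul]; norm_num
      _ ≤ (1 + δ) ^ n := h7
      _ ≤ Real.exp δ ^ n := by
          refine pow_le_pow_left₀ (by positivity) ?_ n
          linarith [Real.add_one_le_exp δ]
      _ = Real.exp ((n : ℝ) * δ) := (Real.exp_nat_mul δ n).symm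
  have h9 : (k : ℝ) ≤ (n : ℝ) * δ := Real.exp_le_exp.mp h8
  rw [hncard]
  rw [hδ] at h9
  linarith [h9]
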